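/- Let F be an independent set of size n−1 in w(H), written as F = {x_i : i ∈ S} ∪ {y_j : j ∈ T} with S, T disjoint and S ∪ T = {1,...,n} \ {q}. Then the maximal independent sets containing F are exactly: F ∪ {y_q}, and additionally F ∪ {x_q} in the case that {x_i : i ∈ S} ∪ {x_q} is an independent set of H. -/

import Mathlib

def whisker {n : ℕ} (H : SimpleGraph (Fin n)) : SimpleGraph (Fin n ⊕ Fin n) :=
  SimpleGraph.fromRel (fun u v =>
    (∃ i j, H.Adj i j ∧ u = Sum.inl i ∧ v = Sum.inl j) ∨ ∃ i, u = Sum.inl i ∧ v = Sum.inr i)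

def IsIndep {V : Type*} (G : SimpleGraph V) (S : Set V) : Prop :=
  ∀ u ∈ S, ∀ v ∈ S, ¬ G.Adj u v

/-- A maximal independent set: an independent set not properly contained in
another independent set. -/
def MaxIndep {V : Type*} [DecidableEq V] (G : SimpleGraph V) (F : Finset V) : Prop :=
  IsIndep G ↑F ∧ ∀ F' : Finset V, IsIndep G ↑F' → F ⊆ F' → F = F'

lemma wh_ll {n} (H : SimpleGraph (Fin n)) (i j : Fin n) :
    (whisker H).Adj (Sum.inl i) (Sum.inl j) ↔ H.Adj i j := by
  simp only [whisker, SimpleGraph.fromRel_adj]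
  constructor
  · rintro ⟨hne, (⟨a, b, hab, ha, hb⟩ | ⟨a, ha, hb⟩) | (⟨a, b, hab, ha, hb⟩ | ⟨a, ha, hb⟩)⟩
    · cases Sum.inl.inj ha; cases Sum.inl.inj hb; exact hab
    · cases hb
    · cases Sum.inl.inj ha; cases Sum.inl.inj hb; exact hab.symm
    · cases hb
  · intro h
    exact ⟨by simpa using H.ne_of_adj h, Or.inl (Or.inl ⟨i, j, h, rfl, rfl⟩)⟩

lemma wh_lr {n} (H : SimpleGraph (Fin n)) (i j : Fin n) :
    (whisker H).Adj (Sum.inl i) (Sum.inr j) ↔ i = j := by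
  simp [whisker, SimpleGraph.fromRel_adj, eq_comm]

lemma wh_rr {n} (H : SimpleGraph (Fin n)) (i j : Fin n) :
    ¬ (whisker H).Adj (Sum.inr i) (Sum.inr j) := by
  simp [whisker, SimpleGraph.fromRel_adj]

/-- Let `F = {x_i : i ∈ S} ∪ {y_j : j ∈ T}` be an independent set of size
`n - 1` in `w(H)`, with `S, T` disjoint and `S ∪ T = {1,...,n} \ {q}`. The
maximal independent sets of `w(H)` containing `F` are exactly `F ∪ {y_q}`,
and additionally `F ∪ {x_q}` when `{x_i : i ∈ S} ∪ {x_q}` is independent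
in `H`. -/
theorem facets_containing_face {n : ℕ} (H : SimpleGraph (Fin n))
    (S T : Finset (Fin n)) (q : Fin n) (hST : Disjoint S T)
    (hq : S ∪ T = Finset.univ \ {q})
    (F : Finset (Fin n ⊕ Fin n)) (hFdef : F = S.image Sum.inl ∪ T.image Sum.inr)
    (hF : IsIndep (whisker H) ↑F) :
    ∀ M : Finset (Fin n ⊕ Fin n),
      (MaxIndep (whisker H) M ∧ F ⊆ M) ↔
        (M = F ∪ {Sum.inr q} ∨
          (IsIndep H ↑(insert q S) ∧ M = F ∪ {Sum.inl q})) := by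
  have hmem : ∀ v, v ∈ F ↔ (∃ i ∈ S, v = Sum.inl i) ∨ (∃ j ∈ T, v = Sum.inr j) := by
    subst hFdef; intro v; simp [eq_comm]
  have hqS : q ∉ S := by
    intro h
    have : q ∈ S ∪ T := Finset.mem_union_left _ h
    rw [hq] at this; simp at this
  have hqT : q ∉ T := by
    intro h
    have : q ∈ S ∪ T := Finset.mem_union_right _ h
    rw [hq] at this; simp at this
  have hcov : ∀ i : Fin n, i ≠ q → i ∈ S ∨ i ∈ T := by
    intro i hi
    have : i ∈ S ∪ T := by rw [hq]; simp [hi]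
    exact Finset.mem_union.mp this
  -- F ∪ {inr q} is independent
  have hIndY : IsIndep (whisker H) ↑(F ∪ {Sum.inr q}) := by
    intro u hu v hv hadj
    simp only [Finset.coe_union, Finset.coe_singleton, Set.mem_union, Set.mem_singleton_iff,
      Finset.mem_coe] at hu hv
    rcases hu with hu | rfl
    · rcases hv with hv | rfl
      · exact hF u hu v hv hadj
      · rcases (hmem u).mp hu with ⟨i, hi, rfl⟩ | ⟨j, hj, rfl⟩
        · exact hqS ((wh_lr H i q).mp hadj ▸ hi)
        · exact wh_rr H j q hadj
    · rcases hv with hv | rfl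
      · rcases (hmem v).mp hv with ⟨i, hi, rfl⟩ | ⟨j, hj, rfl⟩
        · exact hqS ((wh_lr H i q).mp hadj.symm ▸ hi)
        · exact wh_rr H q j hadj
      · exact (whisker H).loopless.irrefl _ hadj
  -- if insert q S indep in H, F ∪ {inl q} is independent
  have hIndX : IsIndep H ↑(insert q S) → IsIndep (whisker H) ↑(F ∪ {Sum.inl q}) := by
    intro hqS' u hu v hv hadj
    simp only [Finset.coe_union, Finset.coe_singleton, Set.mem_union, Set.mem_singleton_iff,
      Finset.mem_coe] at hu hv
    have hqmem : (q : Fin n) ∈ (↑(insert q S) : Set (Fin n)) := by simp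
    rcases hu with hu | rfl
    · rcases hv with hv | rfl
      · exact hF u hu v hv hadj
      · rcases (hmem u).mp hu with ⟨i, hi, rfl⟩ | ⟨j, hj, rfl⟩
        · exact hqS' i (by simp [hi]) q hqmem ((wh_ll H i q).mp hadj)
        · exact hqT (((wh_lr H q j).mp hadj.symm) ▸ hj)
    · rcases hv with hv | rfl
      · rcases (hmem v).mp hv with ⟨i, hi, rfl⟩ | ⟨j, hj, rfl⟩
        · exact hqS' q hqmem i (by simp [hi]) ((wh_ll H q i).mp hadj)
        · exact hqT (((wh_lr H q j).mp hadj) ▸ hj)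
      · exact (whisker H).loopless.irrefl _ hadj
  -- key containment lemma: any independent superset of F is ⊆ F ∪ {inl q, inr q}
  have hsub : ∀ M' : Finset (Fin n ⊕ Fin n), IsIndep (whisker H) ↑M' → F ⊆ M' →
      ∀ v ∈ M', v ∈ F ∨ v = Sum.inl q ∨ v = Sum.inr q := by
    intro M' hM' hFM' v hv
    match v with
    | Sum.inl i =>
      by_cases hiq : i = q
      · exact Or.inr (Or.inl (by rw [hiq]))
      · rcases hcov i hiq with hi | hi
        · exact Or.inl ((hmem _).mpr (Or.inl ⟨i, hi, rfl⟩))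
        · exfalso
          have hri : Sum.inr i ∈ M' := hFM' ((hmem _).mpr (Or.inr ⟨i, hi, rfl⟩))
          exact hM' _ hv _ hri ((wh_lr H i i).mpr rfl)
    | Sum.inr i =>
      by_cases hiq : i = q
      · exact Or.inr (Or.inr (by rw [hiq]))
      · rcases hcov i hiq with hi | hi
        · exfalso
          have hli : Sum.inl i ∈ M' := hFM' ((hmem _).mpr (Or.inl ⟨i, hi, rfl⟩))
          exact hM' _ hli _ hv ((wh_lr H i i).mpr rfl)
        · exact Or.inl ((hmem _).mpr (Or.inr ⟨i, hi, rfl⟩))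
  intro M
  constructor
  · rintro ⟨⟨hMind, hMmax⟩, hFM⟩
    by_cases hlq : Sum.inl q ∈ M
    · -- then inr q ∉ M, and M = F ∪ {inl q}
      have hM_eq : M = F ∪ {Sum.inl q} := by
        apply Finset.Subset.antisymm
        · intro v hv
          rcases hsub M hMind hFM v hv with h | h | h
          · exact Finset.mem_union_left _ h
          · simp [h]
          · exfalso
            subst h
            exact hMind _ hlq _ hv ((wh_lr H q q).mpr rfl)
        · intro v hv
          rcases Finset.mem_union.mp hv with h | h
          · exact hFM h
          · simpa using Finset.mem_singleton.mp h ▸ hlq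
      refine Or.inr ⟨?_, hM_eq⟩
      intro a ha b hb hab
      simp only [Finset.coe_insert, Set.mem_insert_iff, Finset.mem_coe] at ha hb
      have hla : Sum.inl a ∈ M := by
        rcases ha with rfl | ha
        · exact hlq
        · exact hFM ((hmem _).mpr (Or.inl ⟨a, ha, rfl⟩))
      have hlb : Sum.inl b ∈ M := by
        rcases hb with rfl | hb
        · exact hlq
        · exact hFM ((hmem _).mpr (Or.inl ⟨b, hb, rfl⟩))
      exact hMind _ hla _ hlb ((wh_ll H a b).mpr hab)
    · -- M ⊆ F ∪ {inr q}, maximality gives equality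
      left
      apply hMmax (F ∪ {Sum.inr q}) hIndY
      intro v hv
      rcases hsub M hMind hFM v hv with h | h | h
      · exact Finset.mem_union_left _ h
      · exact absurd (h ▸ hv) hlq
      · simp [h]
  · intro hcase
    have hmax : ∀ (X : Finset (Fin n ⊕ Fin n)), (Sum.inl q ∈ X ∨ Sum.inr q ∈ X) →
        F ⊆ X → IsIndep (whisker H) ↑X →
        ∀ F' : Finset (Fin n ⊕ Fin n), IsIndep (whisker H) ↑F' → X ⊆ F' → X = F' := by
      intro X hqX hFX hXind F' hF' hXF'
      apply Finset.Subset.antisymm hXF'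
      intro v hv
      rcases hsub F' hF' (hFX.trans hXF') v hv with h | rfl | rfl
      · exact hFX h
      · rcases hqX with h | h
        · exact h
        · exfalso
          exact hF' _ hv _ (hXF' h) ((wh_lr H q q).mpr rfl)
      · rcases hqX with h | h
        · exfalso
          exact hF' _ (hXF' h) _ hv ((wh_lr H q q).mpr rfl)
        · exact h
    rcases hcase with rfl | ⟨hqS', rfl⟩
    · exact ⟨⟨hIndY, hmax _ (Or.inr (by simp)) Finset.subset_union_left hIndY⟩,
        Finset.subset_union_left⟩
    · exact ⟨⟨hIndX hqS', hmax _ (Or.inl (by simp)) Finset.subset_union_left (hIndX hqS')⟩,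
        Finset.subset_union_left⟩
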